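/- Let q₁, q₂ be complex polynomials with deg q₁ = deg q₂ = d ≥ 2, and define F : ℂ × ℂ → ℂ × ℂ by F(w₁, w₂) = (q₁.eval w₁, q₂.eval w₂). Then the bicomplex Fatou set F₂(F) := (ℂ × ℂ) \ J₂(F) satisfies F₂(F) = ((ℂ \ J(q₁)) ×ˢ (ℂ \ J(q₂))) ∪ ((ℂ \ K(q₁)) ×ˢ J(q₂)) ∪ (J(q₁) ×ˢ (ℂ \ K(q₂))), where for a complex polynomial p, K(p) := {z ∈ ℂ : the orbit (p^[n](z))_{n∈ℕ} is bounded}, J(p) := {z ∈ ℂ : the family of iterates {p^[n]} is not normal (general sense) at z}, and ℂ \ K(p) is the unbounded Fatou component (basin of infinity) of p. -/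

import Mathlib

/-- A family `F : ι → α → E` of functions into a normed space is normal in the general sense on
a set `U` if every sequence in the family has a subsequence which either converges uniformly on
every compact subset of `U` to a limit function, or diverges uniformly to `∞` on every compact
subset of `U`. -/
def NormalGenOn {α E ι : Type*} [TopologicalSpace α] [NormedAddCommGroup E]
    (F : ι → α → E) (U : Set α) : Prop :=
  ∀ u : ℕ → ι, ∃ φ : ℕ → ℕ, StrictMono φ ∧
    ((∃ f : α → E, ∀ K : Set α, K ⊆ U → IsCompact K →
        TendstoUniformlyOn (fun n => F (u (φ n))) f Filter.atTop K) ∨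
     (∀ K : Set α, K ⊆ U → IsCompact K → ∀ M : ℝ, 0 < M →
        ∀ᶠ n in Filter.atTop, ∀ z ∈ K, M ≤ ‖F (u (φ n)) z‖))

/-- A family is normal in the general sense at a point if it is normal in the general sense on
some open neighborhood of that point. -/
def NormalGenAt {α E ι : Type*} [TopologicalSpace α] [NormedAddCommGroup E]
    (F : ι → α → E) (z : α) : Prop :=
  ∃ U : Set α, IsOpen U ∧ z ∈ U ∧ NormalGenOn F U

/-- The Julia set of a self-map `G` of a normed space: the set of points at which the family of
iterates `{G^[n] : n ∈ ℕ}` is not normal in the general sense. -/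
def juliaSet {E : Type*} [NormedAddCommGroup E] (G : E → E) : Set E :=
  {z | ¬ NormalGenAt (fun n : ℕ => G^[n]) z}

/-- The filled-in Julia set of a self-map `G` of a normed space: the set of points with bounded
orbit under `G`. -/
def filledJuliaSet {E : Type*} [NormedAddCommGroup E] (G : E → E) : Set E :=
  {z | Bornology.IsBounded (Set.range fun n : ℕ => G^[n] z)}

section AuxLemmas

open Filter Set Polynomial

lemma exists_doubling (p : Polynomial ℂ) (hd : 2 ≤ p.natDegree) :
    ∃ R : ℝ, 1 ≤ R ∧ ∀ z : ℂ, R ≤ ‖z‖ → 2 * ‖z‖ ≤ ‖p.eval z‖ := by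
  have hp : p ≠ 0 := fun h => by simp [h] at hd
  set d := p.natDegree with hdd
  set a := p.coeff d with ha
  have ha0 : a ≠ 0 := by
    simpa [ha, hdd, Polynomial.coeff_natDegree] using Polynomial.leadingCoeff_ne_zero.2 hp
  have hapos : (0:ℝ) < ‖a‖ := norm_pos_iff.2 ha0
  set C : ℝ := ∑ i ∈ Finset.range d, ‖p.coeff i‖ with hCdef
  have hC0 : 0 ≤ C := Finset.sum_nonneg fun i _ => norm_nonneg _
  refine ⟨max 1 ((C + 2) / ‖a‖), le_max_left _ _, fun z hz => ?_⟩
  have hz1 : 1 ≤ ‖z‖ := le_trans (le_max_left _ _) hz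
  have hz2 : C + 2 ≤ ‖a‖ * ‖z‖ := by
    rw [← div_le_iff₀' hapos]
    exact le_trans (le_max_right _ _) hz
  obtain ⟨e, he⟩ : ∃ e, d = e + 1 := ⟨d - 1, by omega⟩
  have he1 : 1 ≤ e := by omega
  have heval : p.eval z = (∑ i ∈ Finset.range d, p.coeff i * z ^ i) + a * z ^ d := by
    rw [Polynomial.eval_eq_sum_range, Finset.sum_range_succ]
  have hs : ‖∑ i ∈ Finset.range d, p.coeff i * z ^ i‖ ≤ C * ‖z‖ ^ e := by
    calc ‖∑ i ∈ Finset.range d, p.coeff i * z ^ i‖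
        ≤ ∑ i ∈ Finset.range d, ‖p.coeff i * z ^ i‖ := norm_sum_le _ _
      _ ≤ ∑ i ∈ Finset.range d, ‖p.coeff i‖ * ‖z‖ ^ e := by
          refine Finset.sum_le_sum fun i hi => ?_
          rw [norm_mul, norm_pow]
          refine mul_le_mul_of_nonneg_left ?_ (norm_nonneg _)
          exact pow_le_pow_right₀ hz1 (by have := Finset.mem_range.1 hi; omega)
      _ = C * ‖z‖ ^ e := by rw [hCdef, Finset.sum_mul]
  have hlead : ‖a * z ^ d‖ = ‖a‖ * (‖z‖ ^ e * ‖z‖) := by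
    rw [norm_mul, norm_pow, he, pow_succ]
  have hlow : ‖a * z ^ d‖ - ‖∑ i ∈ Finset.range d, p.coeff i * z ^ i‖ ≤ ‖p.eval z‖ := by
    rw [heval]
    have h2 := norm_sub_le (∑ i ∈ Finset.range d, p.coeff i * z ^ i + a * z ^ d)
      (∑ i ∈ Finset.range d, p.coeff i * z ^ i)
    rw [add_sub_cancel_left] at h2
    linarith
  have hpe : ‖z‖ ≤ ‖z‖ ^ e := by
    calc ‖z‖ = ‖z‖ ^ 1 := (pow_one _).symm
    _ ≤ ‖z‖ ^ e := pow_le_pow_right₀ hz1 he1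
  have hppos : (0:ℝ) ≤ ‖z‖ ^ e := pow_nonneg (norm_nonneg _) _
  nlinarith [mul_le_mul_of_nonneg_left hz2 hppos, norm_nonneg z]

lemma escape (p : Polynomial ℂ) (hd : 2 ≤ p.natDegree) {z₀ : ℂ}
    (h : ¬ Bornology.IsBounded (Set.range fun n : ℕ => (fun z : ℂ => p.eval z)^[n] z₀)) :
    ∃ V : Set ℂ, IsOpen V ∧ z₀ ∈ V ∧
      ∀ M : ℝ, 0 < M → ∀ᶠ n in atTop, ∀ z ∈ V, M ≤ ‖(fun z : ℂ => p.eval z)^[n] z‖ := by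
  obtain ⟨R, hR1, hR⟩ := exists_doubling p hd
  set f : ℂ → ℂ := fun z => p.eval z with hf
  rw [isBounded_iff_forall_norm_le] at h
  push_neg at h
  obtain ⟨x, hxmem, hx⟩ := h R
  obtain ⟨N, rfl⟩ := hxmem
  have hcont : Continuous fun z => ‖f^[N] z‖ := ((p.continuous).iterate N).norm
  refine ⟨{z | R < ‖f^[N] z‖}, isOpen_lt continuous_const hcont, hx, ?_⟩
  have key : ∀ z ∈ {z | R < ‖f^[N] z‖}, ∀ k : ℕ, 2 ^ k * R ≤ ‖f^[N + k] z‖ := by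
    intro z hz k
    induction k with
    | zero => simpa using (le_of_lt hz)
    | succ k ih =>
      have hRw : R ≤ ‖f^[N + k] z‖ :=
        le_trans (le_mul_of_one_le_left (by linarith) (one_le_pow₀ one_le_two)) ih
      have h2 : 2 * ‖f^[N + k] z‖ ≤ ‖f^[N + k + 1] z‖ := by
        rw [Function.iterate_succ_apply' f (N + k) z]
        exact hR _ hRw
      calc 2 ^ (k+1) * R = 2 * (2 ^ k * R) := by ring
        _ ≤ 2 * ‖f^[N + k] z‖ := by linarith
        _ ≤ ‖f^[N + (k+1)] z‖ := by rw [show N + (k+1) = (N+k) + 1 by omega]; exact h2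
  intro M hM
  obtain ⟨k, hk⟩ := pow_unbounded_of_one_lt M (one_lt_two (α := ℝ))
  filter_upwards [eventually_ge_atTop (N + k)] with n hn z hz
  have h1 : 2 ^ k * R ≤ 2 ^ (n - N) * R := by
    have : (2:ℝ) ^ k ≤ 2 ^ (n - N) := pow_le_pow_right₀ one_le_two (by omega)
    nlinarith
  have h2 := key z hz (n - N)
  rw [show N + (n - N) = n by omega] at h2
  have : M ≤ 2 ^ k * R := le_trans hk.le (le_mul_of_one_le_right (by positivity) hR1)
  linarith

lemma seq_dichotomy (u : ℕ → ℕ) : ∃ φ : ℕ → ℕ, StrictMono φ ∧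
    ((∃ m, ∀ n, u (φ n) = m) ∨ Tendsto (fun n => u (φ n)) atTop atTop) := by
  by_cases h : ∃ m, {n | u n = m}.Infinite
  · obtain ⟨m, hm⟩ := h
    exact ⟨Nat.nth (fun n => u n = m), Nat.nth_strictMono hm,
      Or.inl ⟨m, fun n => Nat.nth_mem_of_infinite hm n⟩⟩
  · push_neg at h
    refine ⟨id, strictMono_id, Or.inr ?_⟩
    rw [tendsto_atTop]
    intro b
    rw [← Nat.cofinite_eq_atTop, eventually_cofinite]
    have : {n | ¬ b ≤ u (id n)} ⊆ ⋃ m ∈ Finset.range b, {n | u n = m} := by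
      intro n hn
      simp only [Set.mem_iUnion, Finset.mem_range, Set.mem_setOf_eq]
      exact ⟨u n, by simpa using hn, rfl⟩
    exact Set.Finite.subset (Set.Finite.biUnion (Finset.finite_toSet _) fun m _ => h m) this

lemma tuo_self {α E : Type*} [UniformSpace E] (g : α → E) (K : Set α) :
    TendstoUniformlyOn (fun _ : ℕ => g) g atTop K :=
  fun V hV => Filter.Eventually.of_forall fun _ x _ => refl_mem_uniformity hV

lemma tuo_subseq {α E : Type*} [UniformSpace E] {F : ℕ → α → E} {f : α → E} {K : Set α}
    (h : TendstoUniformlyOn F f atTop K) {ψ : ℕ → ℕ} (hψ : Tendsto ψ atTop atTop) :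
    TendstoUniformlyOn (fun n => F (ψ n)) f atTop K :=
  fun V hV => hψ.eventually (h V hV)

lemma iterProd (q₁ q₂ : Polynomial ℂ) (n : ℕ) (w : ℂ × ℂ) :
    (fun w : ℂ × ℂ => (q₁.eval w.1, q₂.eval w.2))^[n] w
      = ((fun z : ℂ => q₁.eval z)^[n] w.1, (fun z : ℂ => q₂.eval z)^[n] w.2) := by
  have h : (fun w : ℂ × ℂ => (q₁.eval w.1, q₂.eval w.2))
      = Prod.map (fun z : ℂ => q₁.eval z) (fun z : ℂ => q₂.eval z) := rfl
  rw [h, Prod.map_iterate]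
  rfl

-- Lemma A₁: escape in first coordinate gives normality of the product family
lemma normal_of_escape_fst (q₁ q₂ : Polynomial ℂ) (hd : 2 ≤ q₁.natDegree) {z₁ : ℂ} (z₂ : ℂ)
    (h : ¬ Bornology.IsBounded (Set.range fun n : ℕ => (fun z : ℂ => q₁.eval z)^[n] z₁)) :
    NormalGenAt (fun n : ℕ => (fun w : ℂ × ℂ => (q₁.eval w.1, q₂.eval w.2))^[n]) (z₁, z₂) := by
  obtain ⟨V, hVo, hz₁V, hV⟩ := escape q₁ hd h
  refine ⟨V ×ˢ Set.univ, hVo.prod isOpen_univ, ⟨hz₁V, trivial⟩, fun u => ?_⟩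
  obtain ⟨φ, hφ, hcase⟩ := seq_dichotomy u
  refine ⟨φ, hφ, ?_⟩
  rcases hcase with ⟨m, hm⟩ | ht
  · left
    refine ⟨(fun w : ℂ × ℂ => (q₁.eval w.1, q₂.eval w.2))^[m], fun K _ _ => ?_⟩
    simp only [hm]
    exact tuo_self _ _
  · right
    intro K hK _ M hM
    obtain ⟨N, hN⟩ := eventually_atTop.1 (hV M hM)
    filter_upwards [ht.eventually (eventually_ge_atTop N)] with n hn w hw
    have h1 : M ≤ ‖(fun z : ℂ => q₁.eval z)^[u (φ n)] w.1‖ := hN _ hn w.1 (hK hw).1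
    have h2 : ‖(fun z : ℂ => q₁.eval z)^[u (φ n)] w.1‖
        ≤ ‖(fun w : ℂ × ℂ => (q₁.eval w.1, q₂.eval w.2))^[u (φ n)] w‖ := by
      rw [iterProd]; exact norm_fst_le ((fun z : ℂ => q₁.eval z)^[u (φ n)] w.1, (fun z : ℂ => q₂.eval z)^[u (φ n)] w.2)
    exact le_trans h1 h2

lemma normal_of_escape_snd (q₁ q₂ : Polynomial ℂ) (hd : 2 ≤ q₂.natDegree) (z₁ : ℂ) {z₂ : ℂ}
    (h : ¬ Bornology.IsBounded (Set.range fun n : ℕ => (fun z : ℂ => q₂.eval z)^[n] z₂)) :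
    NormalGenAt (fun n : ℕ => (fun w : ℂ × ℂ => (q₁.eval w.1, q₂.eval w.2))^[n]) (z₁, z₂) := by
  obtain ⟨V, hVo, hz₂V, hV⟩ := escape q₂ hd h
  refine ⟨Set.univ ×ˢ V, isOpen_univ.prod hVo, ⟨trivial, hz₂V⟩, fun u => ?_⟩
  obtain ⟨φ, hφ, hcase⟩ := seq_dichotomy u
  refine ⟨φ, hφ, ?_⟩
  rcases hcase with ⟨m, hm⟩ | ht
  · left
    refine ⟨(fun w : ℂ × ℂ => (q₁.eval w.1, q₂.eval w.2))^[m], fun K _ _ => ?_⟩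
    simp only [hm]
    exact tuo_self _ _
  · right
    intro K hK _ M hM
    obtain ⟨N, hN⟩ := eventually_atTop.1 (hV M hM)
    filter_upwards [ht.eventually (eventually_ge_atTop N)] with n hn w hw
    have h1 : M ≤ ‖(fun z : ℂ => q₂.eval z)^[u (φ n)] w.2‖ := hN _ hn w.2 (hK hw).2
    have h2 : ‖(fun z : ℂ => q₂.eval z)^[u (φ n)] w.2‖
        ≤ ‖(fun w : ℂ × ℂ => (q₁.eval w.1, q₂.eval w.2))^[u (φ n)] w‖ := by
      rw [iterProd]; exact norm_snd_le ((fun z : ℂ => q₁.eval z)^[u (φ n)] w.1, (fun z : ℂ => q₂.eval z)^[u (φ n)] w.2)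
    exact le_trans h1 h2

lemma subset_fst_img {K : Set (ℂ × ℂ)} {U₁ U₂ : Set ℂ} (hK : K ⊆ U₁ ×ˢ U₂) :
    Prod.fst '' K ⊆ U₁ := by rintro x ⟨w, hw, rfl⟩; exact (hK hw).1

lemma subset_snd_img {K : Set (ℂ × ℂ)} {U₁ U₂ : Set ℂ} (hK : K ⊆ U₁ ×ˢ U₂) :
    Prod.snd '' K ⊆ U₂ := by rintro x ⟨w, hw, rfl⟩; exact (hK hw).2

-- Lemma B: both coordinates normal ⇒ product normal
lemma normal_prod (q₁ q₂ : Polynomial ℂ) {z₁ z₂ : ℂ}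
    (h1 : NormalGenAt (fun n : ℕ => (fun z : ℂ => q₁.eval z)^[n]) z₁)
    (h2 : NormalGenAt (fun n : ℕ => (fun z : ℂ => q₂.eval z)^[n]) z₂) :
    NormalGenAt (fun n : ℕ => (fun w : ℂ × ℂ => (q₁.eval w.1, q₂.eval w.2))^[n]) (z₁, z₂) := by
  obtain ⟨U₁, hU₁o, hz₁, N₁⟩ := h1
  obtain ⟨U₂, hU₂o, hz₂, N₂⟩ := h2
  refine ⟨U₁ ×ˢ U₂, hU₁o.prod hU₂o, ⟨hz₁, hz₂⟩, fun u => ?_⟩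
  obtain ⟨φ₁, hφ₁, hc₁⟩ := N₁ u
  obtain ⟨φ₂, hφ₂, hc₂⟩ := N₂ (fun n => u (φ₁ n))
  refine ⟨φ₁ ∘ φ₂, hφ₁.comp hφ₂, ?_⟩
  rcases hc₁ with ⟨g₁, hg₁⟩ | hdiv₁
  · rcases hc₂ with ⟨g₂, hg₂⟩ | hdiv₂
    · -- both converge
      left
      refine ⟨fun w => (g₁ w.1, g₂ w.2), fun K hK hKc => ?_⟩
      have hK₁ : IsCompact (Prod.fst '' K) := hKc.image continuous_fst
      have hK₂ : IsCompact (Prod.snd '' K) := hKc.image continuous_snd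
      have t₁ := Metric.tendstoUniformlyOn_iff.1
        (tuo_subseq (hg₁ _ (subset_fst_img hK) hK₁) hφ₂.tendsto_atTop)
      have t₂ := Metric.tendstoUniformlyOn_iff.1 (hg₂ _ (subset_snd_img hK) hK₂)
      rw [Metric.tendstoUniformlyOn_iff]
      intro ε hε
      filter_upwards [t₁ ε hε, t₂ ε hε] with n hn₁ hn₂ w hw
      have e := iterProd q₁ q₂ (u (φ₁ (φ₂ n))) w
      show dist _ ((fun w : ℂ × ℂ => (q₁.eval w.1, q₂.eval w.2))^[u ((φ₁ ∘ φ₂) n)] w) < ε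
      rw [show u ((φ₁ ∘ φ₂) n) = u (φ₁ (φ₂ n)) from rfl, e, Prod.dist_eq]
      exact max_lt (hn₁ w.1 ⟨w, hw, rfl⟩) (hn₂ w.2 ⟨w, hw, rfl⟩)
    · -- second diverges
      right
      intro K hK hKc M hM
      have hK₂ : IsCompact (Prod.snd '' K) := hKc.image continuous_snd
      filter_upwards [hdiv₂ _ (subset_snd_img hK) hK₂ M hM] with n hn w hw
      have h1 : M ≤ ‖(fun z : ℂ => q₂.eval z)^[u (φ₁ (φ₂ n))] w.2‖ := hn w.2 ⟨w, hw, rfl⟩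
      have h2' : ‖(fun z : ℂ => q₂.eval z)^[u (φ₁ (φ₂ n))] w.2‖
          ≤ ‖(fun w : ℂ × ℂ => (q₁.eval w.1, q₂.eval w.2))^[u (φ₁ (φ₂ n))] w‖ := by
        rw [iterProd]
        exact norm_snd_le ((fun z : ℂ => q₁.eval z)^[u (φ₁ (φ₂ n))] w.1,
          (fun z : ℂ => q₂.eval z)^[u (φ₁ (φ₂ n))] w.2)
      exact le_trans h1 h2'
  · -- first diverges
    right
    intro K hK hKc M hM
    have hK₁ : IsCompact (Prod.fst '' K) := hKc.image continuous_fst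
    have hd := hdiv₁ _ (subset_fst_img hK) hK₁ M hM
    filter_upwards [hφ₂.tendsto_atTop.eventually hd] with n hn w hw
    have h1 : M ≤ ‖(fun z : ℂ => q₁.eval z)^[u (φ₁ (φ₂ n))] w.1‖ := hn w.1 ⟨w, hw, rfl⟩
    have h2' : ‖(fun z : ℂ => q₁.eval z)^[u (φ₁ (φ₂ n))] w.1‖
        ≤ ‖(fun w : ℂ × ℂ => (q₁.eval w.1, q₂.eval w.2))^[u (φ₁ (φ₂ n))] w‖ := by
      rw [iterProd]
      exact norm_fst_le ((fun z : ℂ => q₁.eval z)^[u (φ₁ (φ₂ n))] w.1,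
        (fun z : ℂ => q₂.eval z)^[u (φ₁ (φ₂ n))] w.2)
    exact le_trans h1 h2'

-- Lemma C₁: product normal at (z₁,z₂) and bounded orbit of z₂ ⇒ q₁-family normal at z₁
lemma normal_fst_of_bounded_snd (q₁ q₂ : Polynomial ℂ) {z₁ z₂ : ℂ}
    (h : NormalGenAt (fun n : ℕ => (fun w : ℂ × ℂ => (q₁.eval w.1, q₂.eval w.2))^[n]) (z₁, z₂))
    (hb : Bornology.IsBounded (Set.range fun n : ℕ => (fun z : ℂ => q₂.eval z)^[n] z₂)) :
    NormalGenAt (fun n : ℕ => (fun z : ℂ => q₁.eval z)^[n]) z₁ := by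
  obtain ⟨U, hUo, hzU, hN⟩ := h
  obtain ⟨U₁, U₂, hU₁o, _, hz₁, hz₂, hsub⟩ := isOpen_prod_iff.1 hUo z₁ z₂ hzU
  obtain ⟨C, hC⟩ := isBounded_iff_forall_norm_le.1 hb
  have hC0 : 0 ≤ C := le_trans (norm_nonneg _) (hC _ ⟨0, rfl⟩)
  refine ⟨U₁, hU₁o, hz₁, fun u => ?_⟩
  obtain ⟨φ, hφ, hcase⟩ := hN u
  refine ⟨φ, hφ, ?_⟩
  have hKsub : ∀ K : Set ℂ, K ⊆ U₁ → K ×ˢ ({z₂} : Set ℂ) ⊆ U := fun K hK =>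
    subset_trans (Set.prod_mono hK (Set.singleton_subset_iff.2 hz₂)) hsub
  rcases hcase with ⟨f, hf⟩ | hdiv
  · left
    refine ⟨fun z => (f (z, z₂)).1, fun K hK hKc => ?_⟩
    have t := Metric.tendstoUniformlyOn_iff.1
      (hf _ (hKsub K hK) (hKc.prod isCompact_singleton))
    rw [Metric.tendstoUniformlyOn_iff]
    intro ε hε
    filter_upwards [t ε hε] with n hn z hz
    have h1 := hn (z, z₂) ⟨hz, rfl⟩
    rw [Prod.dist_eq] at h1
    have e := iterProd q₁ q₂ (u (φ n)) (z, z₂)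
    have : dist ((f (z, z₂)).1) ((fun z : ℂ => q₁.eval z)^[u (φ n)] z)
        = dist ((f (z, z₂)).1)
          (((fun w : ℂ × ℂ => (q₁.eval w.1, q₂.eval w.2))^[u (φ n)] (z, z₂)).1) := by
      rw [e]
    rw [this]
    exact lt_of_le_of_lt (le_max_left _ _) h1
  · right
    intro K hK hKc M hM
    have hM' : 0 < max (C + 1) M := lt_of_lt_of_le hM (le_max_right _ _)
    filter_upwards [hdiv _ (hKsub K hK) (hKc.prod isCompact_singleton) (max (C + 1) M) hM']
      with n hn z hz
    have h1 := hn (z, z₂) ⟨hz, rfl⟩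
    have e := iterProd q₁ q₂ (u (φ n)) (z, z₂)
    rw [e, Prod.norm_def] at h1
    have hb2 : ‖(fun z : ℂ => q₂.eval z)^[u (φ n)] z₂‖ ≤ C := hC _ ⟨u (φ n), rfl⟩
    have : max (C + 1) M ≤ ‖(fun z : ℂ => q₁.eval z)^[u (φ n)] z‖ := by
      rcases max_cases ‖(fun z : ℂ => q₁.eval z)^[u (φ n)] ((z, z₂) : ℂ × ℂ).1‖
        ‖(fun z : ℂ => q₂.eval z)^[u (φ n)] ((z, z₂) : ℂ × ℂ).2‖ with ⟨he, _⟩ | ⟨he, hle⟩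
      · rw [he] at h1; exact h1
      · rw [he] at h1
        exfalso
        have : C + 1 ≤ C := le_trans (le_trans (le_max_left _ _) h1) hb2
        linarith
    exact le_trans (le_max_right _ _) this

lemma normal_snd_of_bounded_fst (q₁ q₂ : Polynomial ℂ) {z₁ z₂ : ℂ}
    (h : NormalGenAt (fun n : ℕ => (fun w : ℂ × ℂ => (q₁.eval w.1, q₂.eval w.2))^[n]) (z₁, z₂))
    (hb : Bornology.IsBounded (Set.range fun n : ℕ => (fun z : ℂ => q₁.eval z)^[n] z₁)) :
    NormalGenAt (fun n : ℕ => (fun z : ℂ => q₂.eval z)^[n]) z₂ := by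
  obtain ⟨U, hUo, hzU, hN⟩ := h
  obtain ⟨U₁, U₂, _, hU₂o, hz₁, hz₂, hsub⟩ := isOpen_prod_iff.1 hUo z₁ z₂ hzU
  obtain ⟨C, hC⟩ := isBounded_iff_forall_norm_le.1 hb
  have hC0 : 0 ≤ C := le_trans (norm_nonneg _) (hC _ ⟨0, rfl⟩)
  refine ⟨U₂, hU₂o, hz₂, fun u => ?_⟩
  obtain ⟨φ, hφ, hcase⟩ := hN u
  refine ⟨φ, hφ, ?_⟩
  have hKsub : ∀ K : Set ℂ, K ⊆ U₂ → ({z₁} : Set ℂ) ×ˢ K ⊆ U := fun K hK =>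
    subset_trans (Set.prod_mono (Set.singleton_subset_iff.2 hz₁) hK) hsub
  rcases hcase with ⟨f, hf⟩ | hdiv
  · left
    refine ⟨fun z => (f (z₁, z)).2, fun K hK hKc => ?_⟩
    have t := Metric.tendstoUniformlyOn_iff.1
      (hf _ (hKsub K hK) (isCompact_singleton.prod hKc))
    rw [Metric.tendstoUniformlyOn_iff]
    intro ε hε
    filter_upwards [t ε hε] with n hn z hz
    have h1 := hn (z₁, z) ⟨rfl, hz⟩
    rw [Prod.dist_eq] at h1
    have e := iterProd q₁ q₂ (u (φ n)) (z₁, z)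
    have : dist ((f (z₁, z)).2) ((fun z : ℂ => q₂.eval z)^[u (φ n)] z)
        = dist ((f (z₁, z)).2)
          (((fun w : ℂ × ℂ => (q₁.eval w.1, q₂.eval w.2))^[u (φ n)] (z₁, z)).2) := by
      rw [e]
    rw [this]
    exact lt_of_le_of_lt (le_max_right _ _) h1
  · right
    intro K hK hKc M hM
    have hM' : 0 < max (C + 1) M := lt_of_lt_of_le hM (le_max_right _ _)
    filter_upwards [hdiv _ (hKsub K hK) (isCompact_singleton.prod hKc) (max (C + 1) M) hM']
      with n hn z hz
    have h1 := hn (z₁, z) ⟨rfl, hz⟩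
    have e := iterProd q₁ q₂ (u (φ n)) (z₁, z)
    rw [e, Prod.norm_def] at h1
    have hb2 : ‖(fun z : ℂ => q₁.eval z)^[u (φ n)] z₁‖ ≤ C := hC _ ⟨u (φ n), rfl⟩
    have : max (C + 1) M ≤ ‖(fun z : ℂ => q₂.eval z)^[u (φ n)] z‖ := by
      rcases max_cases ‖(fun z : ℂ => q₁.eval z)^[u (φ n)] ((z₁, z) : ℂ × ℂ).1‖
        ‖(fun z : ℂ => q₂.eval z)^[u (φ n)] ((z₁, z) : ℂ × ℂ).2‖ with ⟨he, hle⟩ | ⟨he, _⟩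
      · rw [he] at h1
        exfalso
        have : C + 1 ≤ C := le_trans (le_trans (le_max_left _ _) h1) hb2
        linarith
      · rw [he] at h1; exact h1
    exact le_trans (le_max_right _ _) this

end AuxLemmas

open Filter Set Polynomial in
/-- For a non-degenerate bicomplex polynomial `F(w₁, w₂) = (q₁(w₁), q₂(w₂))` of degree `d ≥ 2`,
the bicomplex Fatou set `F₂(F) = (ℂ × ℂ) \ J₂(F)` is given by
`F₂(F) = ((ℂ \ J(q₁)) ×ˢ (ℂ \ J(q₂))) ∪ ((ℂ \ K(q₁)) ×ˢ J(q₂)) ∪ (J(q₁) ×ˢ (ℂ \ K(q₂)))`,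
where `ℂ \ K(p)` is the unbounded Fatou component (basin of infinity) of `p`. -/
theorem stmt18 (q₁ q₂ : Polynomial ℂ) (d : ℕ) (hd : 2 ≤ d)
    (h₁ : q₁.natDegree = d) (h₂ : q₂.natDegree = d) :
    (juliaSet (fun w : ℂ × ℂ => (q₁.eval w.1, q₂.eval w.2)))ᶜ =
      ((juliaSet (fun z : ℂ => q₁.eval z))ᶜ ×ˢ (juliaSet (fun z : ℂ => q₂.eval z))ᶜ) ∪
      ((filledJuliaSet (fun z : ℂ => q₁.eval z))ᶜ ×ˢ juliaSet (fun z : ℂ => q₂.eval z)) ∪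
      (juliaSet (fun z : ℂ => q₁.eval z) ×ˢ (filledJuliaSet (fun z : ℂ => q₂.eval z))ᶜ) := by
  have hd₁ : 2 ≤ q₁.natDegree := h₁ ▸ hd
  have hd₂ : 2 ≤ q₂.natDegree := h₂ ▸ hd
  ext ⟨z₁, z₂⟩
  simp only [Set.mem_compl_iff, Set.mem_union, Set.mem_prod, Set.mem_compl_iff,
    juliaSet, filledJuliaSet, Set.mem_setOf_eq, not_not]
  constructor
  · intro h
    by_cases hJ1 : NormalGenAt (fun n : ℕ => (fun z : ℂ => q₁.eval z)^[n]) z₁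
    · by_cases hJ2 : NormalGenAt (fun n : ℕ => (fun z : ℂ => q₂.eval z)^[n]) z₂
      · exact Or.inl (Or.inl ⟨hJ1, hJ2⟩)
      · exact Or.inl (Or.inr ⟨fun hK1 => hJ2 (normal_snd_of_bounded_fst q₁ q₂ h hK1), hJ2⟩)
    · exact Or.inr ⟨hJ1, fun hK2 => hJ1 (normal_fst_of_bounded_snd q₁ q₂ h hK2)⟩
  · rintro ((⟨hF1, hF2⟩ | ⟨hK1, -⟩) | ⟨-, hK2⟩)
    · exact normal_prod q₁ q₂ hF1 hF2
    · exact normal_of_escape_fst q₁ q₂ hd₁ z₂ hK1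
    · exact normal_of_escape_snd q₁ q₂ hd₂ z₁ hK2
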